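/- If P and Q are probability measures on a finite space and A is any event, then |P(A) - Q(A)| ≤ sqrt(1 - exp(-KL(P || Q))). In particular, P(A) ≥ Q(A) - sqrt(1 - exp(-KL(Q || P))). -/

import Mathlib

open Finset ENNReal

/-- Kullback–Leibler divergence between discrete distributions on a finite space,
taking the value `⊤` when absolute continuity fails. -/
noncomputable def KLdiv {β : Type*} [Fintype β] (P Q : β → ℝ) : ℝ≥0∞ :=
  if ∀ b, Q b = 0 → P b = 0 then
    ENNReal.ofReal (∑ b, P b * Real.log (P b / Q b))
  else ⊤

/-- `exp(-x)` for `x : ℝ≥0∞`, with `exp(-⊤) = 0`. -/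
noncomputable def expNeg (x : ℝ≥0∞) : ℝ :=
  if x = ⊤ then 0 else Real.exp (-x.toReal)

private lemma BH_core {β : Type*} [Fintype β]
    (P Q : β → ℝ) (hP : ∀ b, 0 ≤ P b) (hQ : ∀ b, 0 ≤ Q b)
    (hPsum : ∑ b, P b = 1) (hQsum : ∑ b, Q b = 1)
    (hac : ∀ b, Q b = 0 → P b = 0) (A : Finset β) :
    Real.exp (-(∑ b, P b * Real.log (P b / Q b))) ≤
      1 - (∑ b ∈ A, P b - ∑ b ∈ A, Q b) ^ 2 := by
  classical
  set S := ∑ b, P b * Real.log (P b / Q b) with hS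
  set s : Finset β := Finset.univ.filter (fun b => P b ≠ 0) with hs
  have hposP : ∀ b ∈ s, 0 < P b := by
    intro b hb
    rcases (hP b).lt_or_eq with h | h
    · exact h
    · simp [hs, ← h] at hb
  have hposQ : ∀ b ∈ s, 0 < Q b := by
    intro b hb
    rcases (hQ b).lt_or_eq with h | h
    · exact h
    · exact absurd (hac b h.symm) (by simpa [hs] using hb)
  -- Jensen for exp
  have hws : ∑ b ∈ s, P b = 1 := by
    rw [hs, Finset.sum_filter_ne_zero]; exact hPsum
  have jensen := (convexOn_exp).map_sum_le (t := s) (w := P)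
      (p := fun b => (1/2 : ℝ) * Real.log (Q b / P b))
      (fun b _ => hP b) hws (fun b _ => Set.mem_univ _)
  have hlhs : ∑ b ∈ s, P b • ((1/2 : ℝ) * Real.log (Q b / P b)) = -(S/2) := by
    have : ∀ b ∈ s, P b • ((1/2 : ℝ) * Real.log (Q b / P b))
        = -(1/2) * (P b * Real.log (P b / Q b)) := by
      intro b hb
      have hp := hposP b hb
      have hq := hposQ b hb
      have : Real.log (Q b / P b) = - Real.log (P b / Q b) := by
        rw [← Real.log_inv, inv_div]
      rw [this]; simp [smul_eq_mul]; ring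
    rw [Finset.sum_congr rfl this, ← Finset.mul_sum, hS]
    have : ∑ b ∈ s, P b * Real.log (P b / Q b) = ∑ b, P b * Real.log (P b / Q b) := by
      rw [hs]
      apply Finset.sum_filter_of_ne
      intro b _ h
      intro hPb
      exact h (by simp [hPb])
    rw [this]; ring
  have hrhs : ∑ b ∈ s, P b • Real.exp ((1/2 : ℝ) * Real.log (Q b / P b))
      = ∑ b ∈ s, Real.sqrt (P b * Q b) := by
    apply Finset.sum_congr rfl
    intro b hb
    have hp := hposP b hb
    have hq := hposQ b hb
    have hqp : (0:ℝ) ≤ Q b / P b := div_nonneg hq.le hp.le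
    have h1 : (1/2 : ℝ) * Real.log (Q b / P b) = Real.log (Real.sqrt (Q b / P b)) := by
      rw [Real.log_sqrt hqp]; ring
    rw [h1, Real.exp_log (Real.sqrt_pos.2 (div_pos hq hp)), smul_eq_mul]
    rw [← Real.sqrt_sq hp.le, ← Real.sqrt_mul (sq_nonneg _)]
    congr 1
    field_simp
    rw [Real.sq_sqrt (sq_nonneg (P b))]
  have step1 : Real.exp (-(S/2)) ≤ ∑ b, Real.sqrt (P b * Q b) := by
    refine le_trans ?_ (Finset.sum_le_sum_of_subset_of_nonneg (Finset.subset_univ s)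
      (fun b _ _ => Real.sqrt_nonneg _))
    rw [← hrhs, ← hlhs]
    exact jensen
  -- Cauchy-Schwarz
  have cs : (∑ b, Real.sqrt (P b * Q b)) ^ 2
      ≤ (∑ b, min (P b) (Q b)) * (∑ b, max (P b) (Q b)) := by
    apply Finset.sum_sq_le_sum_mul_sum_of_sq_eq_mul
    · intro b _; exact le_min (hP b) (hQ b)
    · intro b _; exact le_max_of_le_left (hP b)
    · intro b _
      rw [Real.sq_sqrt (mul_nonneg (hP b) (hQ b)), min_mul_max]
  set m := ∑ b, min (P b) (Q b) with hm
  have hmax : ∑ b, max (P b) (Q b) = 2 - m := by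
    have : ∀ b, max (P b) (Q b) = P b + Q b - min (P b) (Q b) := by
      intro b
      have := min_add_max (P b) (Q b)
      linarith
    simp only [this]
    rw [Finset.sum_sub_distrib, Finset.sum_add_distrib, hPsum, hQsum]
    norm_num
    exact hm.symm
  set D := ∑ b ∈ A, P b - ∑ b ∈ A, Q b with hD
  have hsplitP : ∑ b ∈ A, P b + ∑ b ∈ Aᶜ, P b = 1 := by
    rw [Finset.sum_add_sum_compl]; exact hPsum
  have hsplitQ : ∑ b ∈ A, Q b + ∑ b ∈ Aᶜ, Q b = 1 := by
    rw [Finset.sum_add_sum_compl]; exact hQsum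
  have hmsplit : m = ∑ b ∈ A, min (P b) (Q b) + ∑ b ∈ Aᶜ, min (P b) (Q b) := by
    rw [Finset.sum_add_sum_compl]
  have hm1 : m ≤ 1 - D := by
    have h1 : ∑ b ∈ A, min (P b) (Q b) ≤ ∑ b ∈ A, Q b :=
      Finset.sum_le_sum fun b _ => min_le_right _ _
    have h2 : ∑ b ∈ Aᶜ, min (P b) (Q b) ≤ ∑ b ∈ Aᶜ, P b :=
      Finset.sum_le_sum fun b _ => min_le_left _ _
    rw [hmsplit, hD]; linarith
  have hm2 : m ≤ 1 + D := by
    have h1 : ∑ b ∈ A, min (P b) (Q b) ≤ ∑ b ∈ A, P b :=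
      Finset.sum_le_sum fun b _ => min_le_left _ _
    have h2 : ∑ b ∈ Aᶜ, min (P b) (Q b) ≤ ∑ b ∈ Aᶜ, Q b :=
      Finset.sum_le_sum fun b _ => min_le_right _ _
    rw [hmsplit, hD]; linarith
  have key : Real.exp (-S) ≤ m * (2 - m) := by
    have : Real.exp (-S) = Real.exp (-(S/2)) ^ 2 := by
      rw [sq, ← Real.exp_add]; ring_nf
    rw [this, ← hmax]
    exact le_trans (pow_le_pow_left₀ (Real.exp_pos _).le step1 2) cs
  have final : m * (2 - m) ≤ 1 - D ^ 2 := by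
    nlinarith [mul_nonneg (by linarith : (0:ℝ) ≤ 1 - m - D)
      (by linarith : (0:ℝ) ≤ 1 - m + D)]
  linarith

private lemma BH_abs {β : Type*} [Fintype β]
    (P Q : β → ℝ) (hP : ∀ b, 0 ≤ P b) (hQ : ∀ b, 0 ≤ Q b)
    (hPsum : ∑ b, P b = 1) (hQsum : ∑ b, Q b = 1) (A : Finset β) :
    |∑ b ∈ A, P b - ∑ b ∈ A, Q b| ≤ Real.sqrt (1 - expNeg (KLdiv P Q)) := by
  classical
  have hPA0 : 0 ≤ ∑ b ∈ A, P b := Finset.sum_nonneg fun b _ => hP b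
  have hPA1 : ∑ b ∈ A, P b ≤ 1 := by
    rw [← hPsum]
    exact Finset.sum_le_sum_of_subset_of_nonneg (Finset.subset_univ A) fun b _ _ => hP b
  have hQA0 : 0 ≤ ∑ b ∈ A, Q b := Finset.sum_nonneg fun b _ => hQ b
  have hQA1 : ∑ b ∈ A, Q b ≤ 1 := by
    rw [← hQsum]
    exact Finset.sum_le_sum_of_subset_of_nonneg (Finset.subset_univ A) fun b _ _ => hQ b
  by_cases hac : ∀ b, Q b = 0 → P b = 0
  · have core := BH_core P Q hP hQ hPsum hQsum hac A
    have hKL : KLdiv P Q = ENNReal.ofReal (∑ b, P b * Real.log (P b / Q b)) := by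
      rw [KLdiv, if_pos hac]
    have hexp : expNeg (KLdiv P Q) ≤ 1 - (∑ b ∈ A, P b - ∑ b ∈ A, Q b) ^ 2 := by
      rw [hKL, expNeg, if_neg ENNReal.ofReal_ne_top, ENNReal.toReal_ofReal']
      refine le_trans ?_ core
      apply Real.exp_le_exp.2
      simp [le_max_left]
    have h2 : (∑ b ∈ A, P b - ∑ b ∈ A, Q b) ^ 2 ≤ 1 - expNeg (KLdiv P Q) := by linarith
    calc |∑ b ∈ A, P b - ∑ b ∈ A, Q b|
        = Real.sqrt ((∑ b ∈ A, P b - ∑ b ∈ A, Q b) ^ 2) := (Real.sqrt_sq_eq_abs _).symm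
      _ ≤ Real.sqrt (1 - expNeg (KLdiv P Q)) := Real.sqrt_le_sqrt h2
  · have hKL : KLdiv P Q = ⊤ := by rw [KLdiv, if_neg hac]
    rw [hKL, expNeg, if_pos rfl]
    norm_num
    rw [abs_le]
    constructor <;> linarith

/-- For any event `A`, `|P(A) - Q(A)| ≤ √(1 - exp(-KL(P‖Q)))`; in particular
`P(A) ≥ Q(A) - √(1 - exp(-KL(Q‖P)))`. -/
theorem abs_sub_le_sqrt_one_sub_exp_neg_KL
    {β : Type*} [Fintype β]
    (P Q : β → ℝ) (hP : ∀ b, 0 ≤ P b) (hQ : ∀ b, 0 ≤ Q b)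
    (hPsum : ∑ b, P b = 1) (hQsum : ∑ b, Q b = 1) :
    (∀ A : Finset β,
      |∑ b ∈ A, P b - ∑ b ∈ A, Q b| ≤ Real.sqrt (1 - expNeg (KLdiv P Q))) ∧
    (∀ A : Finset β,
      ∑ b ∈ A, P b ≥ ∑ b ∈ A, Q b - Real.sqrt (1 - expNeg (KLdiv Q P))) := by
  constructor
  · exact BH_abs P Q hP hQ hPsum hQsum
  · intro A
    have := BH_abs Q P hQ hP hQsum hPsum A
    have h := abs_le.1 this
    linarith [h.1, h.2]
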